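/- Let n, d ≥ 1 and let A₁, …, Aₙ be skew-Hermitian d×d complex matrices. Suppose κ ≥ 0 and L ≥ 0 are real numbers with Σ_{k=1}^n Aₖᴴ Aₖ = κ·I, ‖Aₖ‖ ≤ L for every k, and L² ≤ κ. Then for every d×d complex matrix B and every real number u, the real part of tr( Σ_{k=1}^n (exp(uAₖ) − I)ᴴ (exp(uAₖ) − I) · B Bᴴ ) is at least ‖B‖_HS² · u²κ · (1 − n|u|L − n(u²/4)L²), where ‖B‖_HS = √(tr(BᴴB)) is the Hilbert–Schmidt (Frobenius) norm and ‖·‖ the ℓ²→ℓ² operator norm. -/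

import Mathlib

open Matrix

/-- The ℓ²→ℓ² operator norm of a square complex matrix. -/
noncomputable def matOpNorm {d : ℕ} (A : Matrix (Fin d) (Fin d) ℂ) : ℝ :=
  ‖Matrix.toEuclideanCLM (𝕜 := ℂ) A‖

/-- The Hilbert–Schmidt (Frobenius) norm of a square complex matrix. -/
noncomputable def hsNorm {d : ℕ} (A : Matrix (Fin d) (Fin d) ℂ) : ℝ :=
  Real.sqrt (Matrix.trace (Aᴴ * A)).re

section Helpers

open NormedSpace Nat

noncomputable def vec {d : ℕ} (M : Matrix (Fin d) (Fin d) ℂ) : EuclideanSpace ℂ (Fin d × Fin d) :=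
  (WithLp.equiv 2 _).symm (fun p => M p.1 p.2)

lemma vec_apply {d : ℕ} (M : Matrix (Fin d) (Fin d) ℂ) (p : Fin d × Fin d) :
    _root_.vec M p = M p.1 p.2 := rfl

lemma vec_add {d : ℕ} (M N : Matrix (Fin d) (Fin d) ℂ) : _root_.vec (M + N) = _root_.vec M + _root_.vec N := rfl

lemma inner_vec {d : ℕ} (M N : Matrix (Fin d) (Fin d) ℂ) :
    (inner ℂ (_root_.vec M) (_root_.vec N) : ℂ) = Matrix.trace (Mᴴ * N) := by
  simp only [PiLp.inner_apply, RCLike.inner_apply, vec_apply, Matrix.trace,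
    Matrix.diag_apply, Matrix.mul_apply, Matrix.conjTranspose_apply]
  rw [Fintype.sum_prod_type]
  rw [Finset.sum_comm]
  simp [mul_comm]

lemma norm_vec_sq {d : ℕ} (M : Matrix (Fin d) (Fin d) ℂ) :
    ‖_root_.vec M‖ ^ 2 = (Matrix.trace (Mᴴ * M)).re := by
  rw [← inner_self_eq_norm_sq (𝕜 := ℂ), inner_vec]; rfl

lemma vec_smul {d : ℕ} (c : ℂ) (M : Matrix (Fin d) (Fin d) ℂ) : _root_.vec (c • M) = c • _root_.vec M := rfl

lemma euc_norm_sq {d : ℕ} (x : EuclideanSpace ℂ (Fin d)) : ‖x‖ ^ 2 = ∑ i, ‖x i‖ ^ 2 := by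
  rw [EuclideanSpace.norm_eq, Real.sq_sqrt (by positivity)]

lemma mulVec_norm_sq_le {d : ℕ} (X : Matrix (Fin d) (Fin d) ℂ) (w : Fin d → ℂ) :
    ∑ i, ‖(X *ᵥ w) i‖ ^ 2 ≤ matOpNorm X ^ 2 * ∑ i, ‖w i‖ ^ 2 := by
  have h := (Matrix.toEuclideanCLM (𝕜 := ℂ) X).le_opNorm ((WithLp.equiv 2 (Fin d → ℂ)).symm w)
  rw [WithLp.equiv_symm_apply, Matrix.toEuclideanCLM_toLp] at h
  have key : ‖(WithLp.equiv 2 (Fin d → ℂ)).symm (Matrix.toLin' X w)‖ ^ 2 ≤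
      (matOpNorm X * ‖(WithLp.equiv 2 (Fin d → ℂ)).symm w‖) ^ 2 :=
    pow_le_pow_left₀ (norm_nonneg _) h 2
  rw [mul_pow] at key
  rw [euc_norm_sq, euc_norm_sq] at key
  simpa [Matrix.toLin'_apply] using key

lemma vec_norm_sq_sum {d : ℕ} (M : Matrix (Fin d) (Fin d) ℂ) :
    ‖_root_.vec M‖ ^ 2 = ∑ j, ∑ i, ‖M i j‖ ^ 2 := by
  rw [EuclideanSpace.norm_eq, Real.sq_sqrt (by positivity), Fintype.sum_prod_type,
    Finset.sum_comm]
  rfl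

lemma vec_mul_sq_le {d : ℕ} (X M : Matrix (Fin d) (Fin d) ℂ) :
    ‖_root_.vec (X * M)‖ ^ 2 ≤ matOpNorm X ^ 2 * ‖_root_.vec M‖ ^ 2 := by
  rw [vec_norm_sq_sum, vec_norm_sq_sum, Finset.mul_sum]
  apply Finset.sum_le_sum
  intro j _
  have := mulVec_norm_sq_le X (fun k => M k j)
  simpa [Matrix.mulVec, dotProduct, Matrix.mul_apply] using this

lemma vec_mul_le {d : ℕ} (X M : Matrix (Fin d) (Fin d) ℂ) :
    ‖_root_.vec (X * M)‖ ≤ matOpNorm X * ‖_root_.vec M‖ := by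
  have h0 : (0:ℝ) ≤ matOpNorm X := norm_nonneg _
  have := vec_mul_sq_le X M
  nlinarith [norm_nonneg (_root_.vec (X * M)), norm_nonneg (_root_.vec M), mul_nonneg h0 (norm_nonneg (_root_.vec M))]

lemma key_identity {d : ℕ} (N : Matrix (Fin d) (Fin d) ℂ) (hN : Nᴴ = -N) :
    (exp (N + N) - 1)ᴴ * (exp (N + N) - 1) =
      (exp N - exp (-N))ᴴ * (exp N - exp (-N)) := by
  set E := exp N with hE
  set F := exp (-N) with hF
  have hFE : F * E = 1 := by
    have h := Matrix.exp_add_of_commute (-N) N ((Commute.refl N).neg_left)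
    rw [hE, hF, ← h, neg_add_cancel, exp_zero]
  have hEF : E * F = 1 := by
    have h := Matrix.exp_add_of_commute N (-N) ((Commute.refl N).neg_right)
    rw [hE, hF, ← h, add_neg_cancel, exp_zero]
  have hEH : Eᴴ = F := by rw [hE, ← Matrix.exp_conjTranspose, hN]
  have hFH : Fᴴ = E := by
    rw [hF, ← Matrix.exp_conjTranspose, conjTranspose_neg, hN, neg_neg]
  have hNN : exp (N + N) = E * E :=
    Matrix.exp_add_of_commute N N (Commute.refl N)
  rw [hNN, conjTranspose_sub, conjTranspose_sub, conjTranspose_mul, hEH, conjTranspose_one,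
    hFH]
  have h4 : F * F * (E * E) = 1 := by
    rw [mul_assoc, ← mul_assoc F E E, hFE, one_mul, hFE]
  calc (F * F - 1) * (E * E - 1) = F * F * (E * E) - F * F - E * E + 1 := by noncomm_ring
    _ = 1 - F * F - E * E + 1 := by rw [h4]
    _ = F * E - F * F - E * E + E * F := by rw [hFE, hEF]
    _ = (F - E) * (E - F) := by noncomm_ring

lemma exp_odd_tail {𝔹 : Type*} [NormedRing 𝔹] [NormedAlgebra ℂ 𝔹] [CompleteSpace 𝔹]
    (T : 𝔹) (hT : ‖T‖ ≤ 1 / 2) :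
    ‖exp T - exp (-T) - (T + T)‖ ≤ (2 / 3) * ‖T‖ ^ 3 := by
  have hf : Summable fun m : ℕ => (m !⁻¹ : ℂ) • T ^ m := expSeries_summable' T
  have hg : Summable fun m : ℕ => (m !⁻¹ : ℂ) • (-T) ^ m := expSeries_summable' (-T)
  set h : ℕ → 𝔹 := fun m => (m !⁻¹ : ℂ) • (T ^ m - (-T) ^ m) with hh
  have hhs : Summable h := by
    simpa [hh, smul_sub] using hf.sub hg
  have hsub : exp T - exp (-T) = ∑' m, h m := by
    simp only [exp_eq_tsum ℂ]
    rw [← hf.tsum_sub hg]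
    congr 1 with m
    simp [hh, smul_sub]
  have h0 : h 0 = 0 := by simp [hh]
  have h1 : h (0 + 1) = T + T := by simp [hh, sub_neg_eq_add]
  have h2 : h (0 + 1 + 1) = 0 := by
    show (((2:ℕ) !⁻¹ : ℂ)) • (T ^ 2 - (-T) ^ 2) = 0
    simp
  have hs1 : Summable fun m => h (m + 1) := by rwa [summable_nat_add_iff]
  have hs2 : Summable fun m => h (m + 1 + 1) := by
    have : Summable fun m => h (m + 2) := by rwa [summable_nat_add_iff]
    exact this
  have hstrip : ∑' m, h m = h 0 + (h (0 + 1) + (h (0 + 1 + 1) + ∑' m, h (m + 1 + 1 + 1))) := by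
    rw [hhs.tsum_eq_zero_add, hs1.tsum_eq_zero_add, hs2.tsum_eq_zero_add]
  have heq : exp T - exp (-T) - (T + T) = ∑' m, h (m + 3) := by
    rw [hsub, hstrip, h0, h1, h2]
    have : (∑' m, h (m + 1 + 1 + 1)) = ∑' m, h (m + 3) := by
      apply tsum_congr; intro m; congr 1
    rw [this]
    abel
  rw [heq]
  have hb : ∀ m : ℕ, ‖h (m + 3)‖ ≤ (1 / 3) * ‖T‖ ^ 3 * (1 / 2) ^ m := by
    intro m
    have h6 : (6 : ℝ) ≤ ((m + 3)! : ℝ) := by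
      have : (3:ℕ)! ≤ (m + 3)! := Nat.factorial_le (by omega)
      have h36 : ((3:ℕ)! : ℝ) = 6 := by norm_num [Nat.factorial]
      calc (6:ℝ) = ((3:ℕ)! : ℝ) := h36.symm
        _ ≤ ((m + 3)! : ℝ) := by exact_mod_cast this
    have hinv : (((m + 3)! : ℝ))⁻¹ ≤ 6⁻¹ := by
      apply inv_anti₀ (by norm_num) h6
    have hpow : ‖T‖ ^ (m + 3) ≤ (1 / 2) ^ m * ‖T‖ ^ 3 := by
      rw [pow_add]
      exact mul_le_mul_of_nonneg_right (pow_le_pow_left₀ (norm_nonneg _) hT m) (by positivity)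
    have hnorm : ‖h (m + 3)‖ ≤ (((m + 3)! : ℝ))⁻¹ * (2 * ‖T‖ ^ (m + 3)) := by
      rw [hh]
      simp only [norm_smul]
      gcongr
      · show ‖((((m + 3)! : ℕ) : ℂ))⁻¹‖ ≤ (((m + 3)! : ℝ))⁻¹
        rw [norm_inv]
        simp
      · calc ‖T ^ (m + 3) - (-T) ^ (m + 3)‖ ≤ ‖T ^ (m + 3)‖ + ‖(-T) ^ (m + 3)‖ :=
              norm_sub_le _ _
          _ ≤ ‖T‖ ^ (m + 3) + ‖T‖ ^ (m + 3) := by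
              gcongr
              · exact norm_pow_le' _ (by omega)
              · calc ‖(-T) ^ (m + 3)‖ ≤ ‖-T‖ ^ (m + 3) := norm_pow_le' _ (by omega)
                  _ = ‖T‖ ^ (m + 3) := by rw [norm_neg]
          _ = 2 * ‖T‖ ^ (m + 3) := by ring
    calc ‖h (m + 3)‖ ≤ (((m + 3)! : ℝ))⁻¹ * (2 * ‖T‖ ^ (m + 3)) := hnorm
      _ ≤ 6⁻¹ * (2 * ((1 / 2) ^ m * ‖T‖ ^ 3)) := by
          apply mul_le_mul hinv _ (by positivity) (by norm_num)
          nlinarith [hpow]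
      _ = (1 / 3) * ‖T‖ ^ 3 * (1 / 2) ^ m := by ring
  have hgeo : Summable fun m : ℕ => (1 / 3) * ‖T‖ ^ 3 * (1 / 2 : ℝ) ^ m :=
    (summable_geometric_of_lt_one (by norm_num) (by norm_num)).mul_left _
  have hsn : Summable fun m => ‖h (m + 3)‖ :=
    Summable.of_nonneg_of_le (fun m => norm_nonneg _) hb hgeo
  calc ‖∑' m, h (m + 3)‖ ≤ ∑' m, ‖h (m + 3)‖ := norm_tsum_le_tsum_norm hsn
    _ ≤ ∑' m : ℕ, (1 / 3) * ‖T‖ ^ 3 * (1 / 2 : ℝ) ^ m := Summable.tsum_le_tsum hb hsn hgeo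
    _ = (1 / 3) * ‖T‖ ^ 3 * 2 := by
        rw [tsum_mul_left, tsum_geometric_of_lt_one (by norm_num) (by norm_num)]
        norm_num
    _ = (2 / 3) * ‖T‖ ^ 3 := by ring

open scoped Matrix.Norms.L2Operator in
lemma R_bound {d : ℕ} (N : Matrix (Fin d) (Fin d) ℂ) (h : matOpNorm N ≤ 1 / 2) :
    matOpNorm (exp N - exp (-N) - (N + N)) ≤ (2 / 3) * matOpNorm N ^ 3 := by
  have h1 : ∀ M : Matrix (Fin d) (Fin d) ℂ, matOpNorm M = ‖M‖ := fun M => rfl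
  rw [h1] at h ⊢
  exact exp_odd_tail N h

open scoped Matrix.Norms.L2Operator in
lemma matOpNorm_ofReal_smul {d : ℕ} (c : ℝ) (M : Matrix (Fin d) (Fin d) ℂ) :
    matOpNorm ((c : ℂ) • M) = |c| * matOpNorm M := by
  have h1 : ∀ M : Matrix (Fin d) (Fin d) ℂ, matOpNorm M = ‖M‖ := fun M => rfl
  rw [h1, h1, norm_smul, Complex.norm_real, Real.norm_eq_abs]

lemma matOpNorm_nonneg {d : ℕ} (M : Matrix (Fin d) (Fin d) ℂ) : 0 ≤ matOpNorm M :=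
  norm_nonneg _

end Helpers

set_option maxHeartbeats 2000000

/-- The key lower bound (display (lowerbound)) in the proof of Proposition 3.2: if
`A₁, …, Aₙ` are skew-Hermitian, `Σ Aₖᴴ Aₖ = κ·I`, `‖Aₖ‖ ≤ L` and `L² ≤ κ`, then for every
matrix `B` and real `u`,
`Re tr( Σ (exp(uAₖ) − I)ᴴ(exp(uAₖ) − I) · BBᴴ ) ≥ ‖B‖²_HS u²κ (1 − n|u|L − n(u²/4)L²)`. -/
theorem trace_lower_bound {n d : ℕ} (hn : 1 ≤ n) (hd : 1 ≤ d)
    (A : Fin n → Matrix (Fin d) (Fin d) ℂ) (hA : ∀ k, (A k)ᴴ = -(A k))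
    (κ L : ℝ) (hκ : 0 ≤ κ) (hL : 0 ≤ L)
    (hsum : ∑ k, (A k)ᴴ * A k = (κ : ℂ) • (1 : Matrix (Fin d) (Fin d) ℂ))
    (hAL : ∀ k, matOpNorm (A k) ≤ L) (hL2 : L ^ 2 ≤ κ)
    (B : Matrix (Fin d) (Fin d) ℂ) (u : ℝ) :
    hsNorm B ^ 2 * (u ^ 2 * κ) * (1 - n * |u| * L - n * (u ^ 2 / 4) * L ^ 2) ≤
      (Matrix.trace ((∑ k, (NormedSpace.exp ((u : ℂ) • A k) - 1)ᴴ *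
          (NormedSpace.exp ((u : ℂ) • A k) - 1)) * (B * Bᴴ))).re := by
  classical
  set x : ℝ := |u| * L with hx_def
  have hx0 : 0 ≤ x := mul_nonneg (abs_nonneg _) hL
  set c : ℂ := ((u / 2 : ℝ) : ℂ) with hc_def
  set N : Fin n → Matrix (Fin d) (Fin d) ℂ := fun k => c • A k with hN_def
  set S : Fin n → Matrix (Fin d) (Fin d) ℂ :=
    fun k => NormedSpace.exp (N k) - NormedSpace.exp (-(N k)) with hS_def
  have hcc : c + c = ((u : ℝ) : ℂ) := by
    rw [hc_def]
    norm_cast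
    ring
  have hsplit : ∀ k, (u : ℂ) • A k = N k + N k := by
    intro k
    rw [hN_def, ← add_smul, hcc]
  have hskew : ∀ k, (N k)ᴴ = -(N k) := by
    intro k
    rw [hN_def]
    simp only [Matrix.conjTranspose_smul, hA k]
    rw [hc_def]
    simp [Complex.conj_ofReal]
  -- the exponential-difference identity
  have hid : ∀ k, (NormedSpace.exp ((u : ℂ) • A k) - 1)ᴴ *
      (NormedSpace.exp ((u : ℂ) • A k) - 1) = (S k)ᴴ * S k := by
    intro k
    rw [hsplit k]
    exact key_identity (N k) (hskew k)
  -- trace rewrite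
  have htr : (Matrix.trace ((∑ k, (NormedSpace.exp ((u : ℂ) • A k) - 1)ᴴ *
      (NormedSpace.exp ((u : ℂ) • A k) - 1)) * (B * Bᴴ))).re
      = ∑ k, ‖_root_.vec (S k * B)‖ ^ 2 := by
    have e1 : (∑ k, (NormedSpace.exp ((u : ℂ) • A k) - 1)ᴴ *
        (NormedSpace.exp ((u : ℂ) • A k) - 1)) = ∑ k, (S k)ᴴ * S k :=
      Finset.sum_congr rfl (fun k _ => hid k)
    rw [e1, Finset.sum_mul, Matrix.trace_sum]
    rw [Complex.re_sum]
    apply Finset.sum_congr rfl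
    intro k _
    rw [norm_vec_sq]
    congr 1
    have : (S k)ᴴ * S k * (B * Bᴴ) = ((S k)ᴴ * S k * B) * Bᴴ := by
      noncomm_ring
    rw [this, Matrix.trace_mul_comm]
    congr 1
    rw [Matrix.conjTranspose_mul]
    noncomm_ring
  rw [htr]
  -- HS norm of B
  have hB2 : hsNorm B ^ 2 = ‖_root_.vec B‖ ^ 2 := by
    rw [hsNorm, ← norm_vec_sq, Real.sq_sqrt (by positivity)]
  rw [hB2]
  have hvB : 0 ≤ ‖_root_.vec B‖ := norm_nonneg _
  -- sum of squares identity
  have hsumAB : ∑ k, ‖_root_.vec (A k * B)‖ ^ 2 = κ * ‖_root_.vec B‖ ^ 2 := by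
    have e1 : ∀ k : Fin n, ‖_root_.vec (A k * B)‖ ^ 2 =
        (Matrix.trace (Bᴴ * ((A k)ᴴ * A k) * B)).re := by
      intro k
      rw [norm_vec_sq]
      congr 1
      rw [Matrix.conjTranspose_mul]
      rw [Matrix.mul_assoc, Matrix.mul_assoc, Matrix.mul_assoc]
    rw [Finset.sum_congr rfl (fun k _ => e1 k)]
    rw [← Complex.re_sum, ← Matrix.trace_sum]
    have e2 : ∑ k, Bᴴ * ((A k)ᴴ * A k) * B = Bᴴ * (∑ k, (A k)ᴴ * A k) * B := by
      rw [Finset.mul_sum, Finset.sum_mul]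
    rw [e2, hsum]
    have e3 : Bᴴ * ((κ : ℂ) • (1 : Matrix (Fin d) (Fin d) ℂ)) * B = (κ : ℂ) • (Bᴴ * B) := by
      rw [Matrix.mul_smul, Matrix.mul_one, Matrix.smul_mul]
    rw [e3, Matrix.trace_smul]
    rw [norm_vec_sq]
    simp [smul_eq_mul, Complex.mul_re, Complex.ofReal_re, Complex.ofReal_im]
  -- case split on x ≤ 1
  by_cases hx1 : x ≤ 1
  · -- main case
    -- per-k bounds
    have haX : ∀ k, ‖_root_.vec ((u : ℂ) • (A k * B))‖ ≤ x * ‖_root_.vec B‖ := by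
      intro k
      rw [_root_.vec_smul]
      rw [norm_smul, Complex.norm_real, Real.norm_eq_abs]
      calc |u| * ‖_root_.vec (A k * B)‖ ≤ |u| * (matOpNorm (A k) * ‖_root_.vec B‖) := by
            apply mul_le_mul_of_nonneg_left (vec_mul_le _ _) (abs_nonneg _)
        _ ≤ |u| * (L * ‖_root_.vec B‖) := by
            apply mul_le_mul_of_nonneg_left _ (abs_nonneg _)
            exact mul_le_mul_of_nonneg_right (hAL k) hvB
        _ = x * ‖_root_.vec B‖ := by rw [hx_def]; ring
    have hRb : ∀ k, matOpNorm (S k - ((u : ℂ) • A k)) ≤ x ^ 3 / 12 := by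
      intro k
      have hNx : matOpNorm (N k) ≤ x / 2 := by
        rw [hN_def]
        have : matOpNorm (c • A k) = |u / 2| * matOpNorm (A k) := matOpNorm_ofReal_smul _ _
        rw [this, abs_div]
        have h2 : |(2:ℝ)| = 2 := by norm_num
        rw [h2]
        calc |u| / 2 * matOpNorm (A k) ≤ |u| / 2 * L := by
              apply mul_le_mul_of_nonneg_left (hAL k) (by positivity)
          _ = x / 2 := by rw [hx_def]; ring
      have hN12 : matOpNorm (N k) ≤ 1 / 2 := le_trans hNx (by linarith)
      have hR := R_bound (N k) hN12
      have heq : S k - ((u : ℂ) • A k) =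
          NormedSpace.exp (N k) - NormedSpace.exp (-(N k)) - (N k + N k) := by
        rw [hS_def, hsplit k]
      rw [heq]
      calc matOpNorm (NormedSpace.exp (N k) - NormedSpace.exp (-(N k)) - (N k + N k))
          ≤ (2 / 3) * matOpNorm (N k) ^ 3 := hR
        _ ≤ (2 / 3) * (x / 2) ^ 3 := by
            apply mul_le_mul_of_nonneg_left _ (by norm_num)
            exact pow_le_pow_left₀ (matOpNorm_nonneg _) hNx 3
        _ = x ^ 3 / 12 := by ring
    have hper : ∀ k, ‖_root_.vec ((u : ℂ) • (A k * B))‖ ^ 2 - (x ^ 4 / 6) * ‖_root_.vec B‖ ^ 2 ≤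
        ‖_root_.vec (S k * B)‖ ^ 2 := by
      intro k
      have hdecomp : S k * B = (u : ℂ) • (A k * B) + (S k - (u : ℂ) • A k) * B := by
        have h1 : (S k - (u : ℂ) • A k) * B = S k * B - ((u : ℂ) • A k) * B :=
          Matrix.sub_mul _ _ _
        have h2 : ((u : ℂ) • A k) * B = (u : ℂ) • (A k * B) := Matrix.smul_mul _ _ _
        rw [h1, h2]
        abel
      have hvd : _root_.vec (S k * B) = _root_.vec ((u : ℂ) • (A k * B)) +
          _root_.vec ((S k - (u : ℂ) • A k) * B) := by
        rw [hdecomp, _root_.vec_add]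
      set X := _root_.vec ((u : ℂ) • (A k * B))
      set Y := _root_.vec ((S k - (u : ℂ) • A k) * B)
      have hexp : ‖X + Y‖ ^ 2 = ‖X‖ ^ 2 + 2 * RCLike.re (inner ℂ X Y : ℂ) + ‖Y‖ ^ 2 :=
        norm_add_sq (𝕜 := ℂ) X Y
      have hcs : |RCLike.re (inner ℂ X Y : ℂ)| ≤ ‖X‖ * ‖Y‖ :=
        le_trans (RCLike.abs_re_le_norm _) (norm_inner_le_norm _ _)
      have hYb : ‖Y‖ ≤ (x ^ 3 / 12) * ‖_root_.vec B‖ := by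
        calc ‖Y‖ ≤ matOpNorm (S k - (u : ℂ) • A k) * ‖_root_.vec B‖ := vec_mul_le _ _
          _ ≤ (x ^ 3 / 12) * ‖_root_.vec B‖ := mul_le_mul_of_nonneg_right (hRb k) hvB
      have hXb : ‖X‖ ≤ x * ‖_root_.vec B‖ := haX k
      rw [hvd]
      have hX0 : 0 ≤ ‖X‖ := norm_nonneg _
      have hY0 : 0 ≤ ‖Y‖ := norm_nonneg _
      nlinarith [abs_le.mp hcs, mul_le_mul hXb hYb hY0 (mul_nonneg hx0 hvB),
        mul_nonneg hx0 hvB]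
    -- sum the per-k bounds
    have hsum1 : ∑ k, ‖_root_.vec ((u : ℂ) • (A k * B))‖ ^ 2 = u ^ 2 * κ * ‖_root_.vec B‖ ^ 2 := by
      have e1 : ∀ k : Fin n, ‖_root_.vec ((u : ℂ) • (A k * B))‖ ^ 2 =
          u ^ 2 * ‖_root_.vec (A k * B)‖ ^ 2 := by
        intro k
        rw [_root_.vec_smul, norm_smul, Complex.norm_real, Real.norm_eq_abs, mul_pow, sq_abs]
      rw [Finset.sum_congr rfl (fun k _ => e1 k), ← Finset.mul_sum, hsumAB]
      ring
    have hmain : u ^ 2 * κ * ‖_root_.vec B‖ ^ 2 - n * ((x ^ 4 / 6) * ‖_root_.vec B‖ ^ 2) ≤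
        ∑ k, ‖_root_.vec (S k * B)‖ ^ 2 := by
      calc u ^ 2 * κ * ‖_root_.vec B‖ ^ 2 - n * ((x ^ 4 / 6) * ‖_root_.vec B‖ ^ 2)
          = ∑ k, ‖_root_.vec ((u : ℂ) • (A k * B))‖ ^ 2 - ∑ k : Fin n, (x ^ 4 / 6) * ‖_root_.vec B‖ ^ 2 := by
            rw [hsum1, Finset.sum_const]
            simp only [Finset.card_univ, Fintype.card_fin, nsmul_eq_mul]
        _ = ∑ k, (‖_root_.vec ((u : ℂ) • (A k * B))‖ ^ 2 - (x ^ 4 / 6) * ‖_root_.vec B‖ ^ 2) := by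
            rw [Finset.sum_sub_distrib]
        _ ≤ ∑ k, ‖_root_.vec (S k * B)‖ ^ 2 := Finset.sum_le_sum (fun k _ => hper k)
    -- final arithmetic
    have hn1 : (1 : ℝ) ≤ (n : ℝ) := by exact_mod_cast hn
    have hx2 : x ^ 2 = u ^ 2 * L ^ 2 := by rw [hx_def]; rw [mul_pow, sq_abs]
    have hkey : (n : ℝ) * (x ^ 4 / 6) ≤ (n : ℝ) * (x * (u ^ 2 * κ)) := by
      apply mul_le_mul_of_nonneg_left _ (by positivity)
      have h1 : x ^ 4 / 6 ≤ x ^ 4 := by nlinarith [pow_nonneg hx0 4]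
      have h2 : x ^ 4 ≤ x * x ^ 2 := by nlinarith [pow_nonneg hx0 2, pow_nonneg hx0 3]
      have h3 : x * x ^ 2 ≤ x * (u ^ 2 * κ) := by
        apply mul_le_mul_of_nonneg_left _ hx0
        rw [hx2]
        apply mul_le_mul_of_nonneg_left hL2 (by positivity)
      linarith
    have hterm : 0 ≤ ‖_root_.vec B‖ ^ 2 * (u ^ 2 * κ) * ((n : ℝ) * (u ^ 2 / 4) * L ^ 2) := by
      positivity
    calc ‖_root_.vec B‖ ^ 2 * (u ^ 2 * κ) * (1 - n * |u| * L - n * (u ^ 2 / 4) * L ^ 2)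
        ≤ ‖_root_.vec B‖ ^ 2 * (u ^ 2 * κ) * (1 - n * x) := by
          have e : (1 - (n:ℝ) * |u| * L - n * (u ^ 2 / 4) * L ^ 2)
              = (1 - n * x) - n * (u ^ 2 / 4) * L ^ 2 := by rw [hx_def]; ring
          rw [e, mul_sub]
          linarith [hterm]
      _ = u ^ 2 * κ * ‖_root_.vec B‖ ^ 2 - n * x * (u ^ 2 * κ) * ‖_root_.vec B‖ ^ 2 := by ring
      _ ≤ u ^ 2 * κ * ‖_root_.vec B‖ ^ 2 - n * ((x ^ 4 / 6) * ‖_root_.vec B‖ ^ 2) := by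
          have := mul_le_mul_of_nonneg_right hkey (sq_nonneg ‖_root_.vec B‖)
          nlinarith [this]
      _ ≤ ∑ k, ‖_root_.vec (S k * B)‖ ^ 2 := hmain
  · -- degenerate case : x > 1, LHS is nonpositive
    push_neg at hx1
    have hn1 : (1 : ℝ) ≤ (n : ℝ) := by exact_mod_cast hn
    have hfneg : 1 - (n : ℝ) * |u| * L - n * (u ^ 2 / 4) * L ^ 2 ≤ 0 := by
      have h1 : (n : ℝ) * |u| * L ≥ x := by
        rw [hx_def]
        nlinarith [hx0, abs_nonneg u]
      nlinarith [sq_nonneg u, sq_nonneg L, mul_nonneg (mul_nonneg (le_trans zero_le_one hn1)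
        (mul_nonneg (sq_nonneg u) (by norm_num : (0:ℝ) ≤ 1/4))) (sq_nonneg L)]
    have hLHS : ‖_root_.vec B‖ ^ 2 * (u ^ 2 * κ) * (1 - n * |u| * L - n * (u ^ 2 / 4) * L ^ 2) ≤ 0 :=
      mul_nonpos_of_nonneg_of_nonpos (by positivity) hfneg
    have hRHS : 0 ≤ ∑ k, ‖_root_.vec (S k * B)‖ ^ 2 :=
      Finset.sum_nonneg (fun k _ => sq_nonneg _)
    linarith
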